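/- Let V be a Hilbert space, S_A a strongly continuous semigroup on V with generator A, and X: [0,T] → V continuous with ⟨X_t, ξ⟩ = ∫₀^t ⟨X_r, A*ξ⟩ dr for all ξ ∈ Dom(A*) and t ∈ [0,T] (with X_0 = 0). Then X ≡ 0 on [0,T]. -/

import Mathlib

open MeasureTheory Real Set Filter Topology intervalIntegral
open scoped InnerProductSpace

section Auxiliary

variable {V : Type*} [NormedAddCommGroup V] [InnerProductSpace ℝ V] [CompleteSpace V]

/-- Local uniform bound on the semigroup, via Banach–Steinhaus. -/
lemma sg_bound (S : ℝ → V →L[ℝ] V)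
    (hScont : ∀ v : V, ContinuousOn (fun t => S t v) (Set.Ici 0)) (b : ℝ) :
    ∃ M : ℝ, 0 ≤ M ∧ ∀ τ ∈ Set.Icc (0:ℝ) b, ‖S τ‖ ≤ M := by
  rcases le_or_gt b 0 with hb | hb
  · rcases eq_or_lt_of_le hb with rfl | hb'
    · refine ⟨max ‖S 0‖ 0, le_max_right _ _, fun τ hτ => ?_⟩
      have : τ = 0 := le_antisymm hτ.2 hτ.1
      simp [this]
    · exact ⟨0, le_rfl, fun τ hτ => absurd (hτ.1.trans hτ.2) (not_le.2 hb')⟩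
  · have h : ∀ v : V, ∃ C, ∀ i : (Set.Icc (0:ℝ) b), ‖S i v‖ ≤ C := by
      intro v
      obtain ⟨C, hC⟩ := isCompact_Icc.exists_bound_of_continuousOn
        ((hScont v).mono (fun x hx => hx.1))
      exact ⟨C, fun i => hC i i.2⟩
    obtain ⟨M, hM⟩ := banach_steinhaus h
    refine ⟨max M 0, le_max_right _ _, fun τ hτ => le_trans (hM ⟨τ, hτ⟩) (le_max_left _ _)⟩

/-- Joint continuity of the semigroup action, as a filter statement. -/
lemma sg_tendsto (S : ℝ → V →L[ℝ] V)
    (hScont : ∀ v : V, ContinuousOn (fun t => S t v) (Set.Ici 0))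
    (l : Filter ℝ) (u : ℝ → ℝ) (w : ℝ → V) (τ₀ : ℝ) (v₀ : V) (hτ₀ : 0 ≤ τ₀)
    (hu : Tendsto u l (𝓝 τ₀)) (h0 : ∀ᶠ s in l, 0 ≤ u s) (hw : Tendsto w l (𝓝 v₀)) :
    Tendsto (fun s => S (u s) (w s)) l (𝓝 (S τ₀ v₀)) := by
  obtain ⟨M, hM0, hM⟩ := sg_bound S hScont (τ₀ + 1)
  have h1 : Tendsto (fun s => S (u s) v₀) l (𝓝 (S τ₀ v₀)) := by
    have hu' : Tendsto u l (𝓝[Set.Ici 0] τ₀) := tendsto_nhdsWithin_iff.mpr ⟨hu, h0⟩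
    exact (hScont v₀ τ₀ hτ₀).tendsto.comp hu'
  rw [tendsto_iff_norm_sub_tendsto_zero]
  have hle : ∀ᶠ s in l, ‖S (u s) (w s) - S τ₀ v₀‖ ≤ M * ‖w s - v₀‖ + ‖S (u s) v₀ - S τ₀ v₀‖ := by
    filter_upwards [h0, hu.eventually_lt_const (lt_add_one τ₀)] with s hs0 hs1
    have hbound : ‖S (u s)‖ ≤ M := hM _ ⟨hs0, hs1.le⟩
    calc ‖S (u s) (w s) - S τ₀ v₀‖
        ≤ ‖S (u s) (w s) - S (u s) v₀‖ + ‖S (u s) v₀ - S τ₀ v₀‖ := norm_sub_le_norm_sub_add_norm_sub _ _ _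
      _ ≤ M * ‖w s - v₀‖ + ‖S (u s) v₀ - S τ₀ v₀‖ := by
          refine add_le_add ?_ le_rfl
          rw [← map_sub]
          exact le_trans ((S (u s)).le_opNorm _) (by gcongr)
  refine squeeze_zero' (Eventually.of_forall fun s => norm_nonneg _) hle ?_
  have : Tendsto (fun s => M * ‖w s - v₀‖ + ‖S (u s) v₀ - S τ₀ v₀‖) l (𝓝 (M * 0 + 0)) := by
    exact ((tendsto_iff_norm_sub_tendsto_zero.mp hw).const_mul M).add
      (tendsto_iff_norm_sub_tendsto_zero.mp h1)
  simpa using this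

/-- Right derivative of the orbit map at later times. -/
lemma sg_orbit_deriv (S : ℝ → V →L[ℝ] V)
    (hSadd : ∀ s t : ℝ, 0 ≤ s → 0 ≤ t → S (s + t) = (S s).comp (S t))
    (v w : V) (hder0 : HasDerivAt (fun t : ℝ => S t v) w 0)
    (τ : ℝ) (hτ : 0 ≤ τ) :
    HasDerivWithinAt (fun σ => S σ v) (S τ w) (Set.Ici τ) τ := by
  have h1 : HasDerivWithinAt (fun h : ℝ => S τ (S h v)) (S τ w) (Set.Ici 0) 0 :=
    (S τ).hasFDerivAt.comp_hasDerivWithinAt 0 hder0.hasDerivWithinAt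
  have h2 : HasDerivWithinAt (fun h : ℝ => S (τ + h) v) (S τ w) (Set.Ici 0) 0 := by
    refine h1.congr (fun h hh => ?_) ?_
    · rw [hSadd τ h hτ hh]; rfl
    · show S (τ + 0) v = S τ (S 0 v)
      rw [hSadd τ 0 hτ le_rfl]; rfl
  have h3 : HasDerivWithinAt (fun σ : ℝ => σ - τ) 1 (Set.Ici τ) τ := by
    simpa using ((hasDerivAt_id τ).sub_const τ).hasDerivWithinAt
  have h4 := HasDerivWithinAt.scomp (t' := Set.Ici (0:ℝ)) τ (by simpa using h2) h3
    (fun σ hσ => by simpa using sub_nonneg.2 (Set.mem_Ici.1 hσ))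
  have h5 := h4.congr (f₁ := fun σ => S σ v) (fun σ _ => by
      show S σ v = S (τ + (σ - τ)) v
      congr 1; ring) (by show S τ v = S (τ + (τ - τ)) v; congr 1; ring)
  simpa using h5

/-- Construction of test vectors in the adjoint domain. -/
lemma sg_test_vector (S : ℝ → V →L[ℝ] V)
    (hS0 : S 0 = ContinuousLinearMap.id ℝ V)
    (hSadd : ∀ s t : ℝ, 0 ≤ s → 0 ≤ t → S (s + t) = (S s).comp (S t))
    (hScont : ∀ v : V, ContinuousOn (fun t => S t v) (Set.Ici 0))
    (A : V →ₗ.[ℝ] V) (hdense : Dense (A.domain : Set V))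
    (hgen : ∀ v : A.domain, HasDerivAt (fun t : ℝ => S t (v : V)) (A v) 0)
    (a : ℝ) (ha : 0 ≤ a) (η : V) :
    ∃ ξ : A.adjoint.domain,
      (∀ v : V, ⟪(ξ : V), v⟫_ℝ = ∫ τ in (0:ℝ)..a, ⟪S τ v, η⟫_ℝ) ∧
      (A.adjoint ξ : V) = ContinuousLinearMap.adjoint (S a) η - η := by
  have hContIn : ∀ v : V, ContinuousOn (fun τ => ⟪S τ v, η⟫_ℝ) (Set.Ici 0) :=
    fun v => (hScont v).inner continuousOn_const
  have hInt : ∀ v : V, IntervalIntegrable (fun τ => ⟪S τ v, η⟫_ℝ) volume 0 a :=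
    fun v => ((hContIn v).mono (by rw [Set.uIcc_of_le ha]; exact fun x hx => hx.1)).intervalIntegrable
  obtain ⟨M, hM0, hM⟩ := sg_bound S hScont a
  -- the linear functional
  let L : V →ₗ[ℝ] ℝ :=
    { toFun := fun v => ∫ τ in (0:ℝ)..a, ⟪S τ v, η⟫_ℝ
      map_add' := by
        intro v v'
        show (∫ τ in (0:ℝ)..a, ⟪S τ (v + v'), η⟫_ℝ) = _
        rw [← intervalIntegral.integral_add (hInt v) (hInt v')]
        apply intervalIntegral.integral_congr
        intro τ _; simp [inner_add_left]
      map_smul' := by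
        intro c v
        show (∫ τ in (0:ℝ)..a, ⟪S τ (c • v), η⟫_ℝ) = _
        rw [RingHom.id_apply, ← intervalIntegral.integral_smul]
        apply intervalIntegral.integral_congr
        intro τ _; simp [real_inner_smul_left] }
  have hLbound : ∀ v : V, ‖L v‖ ≤ (M * ‖η‖ * a) * ‖v‖ := by
    intro v
    have := intervalIntegral.norm_integral_le_of_norm_le_const
      (C := M * ‖v‖ * ‖η‖) (f := fun τ => ⟪S τ v, η⟫_ℝ) (a := 0) (b := a) ?_
    · calc ‖L v‖ ≤ M * ‖v‖ * ‖η‖ * |a - 0| := this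
        _ = (M * ‖η‖ * a) * ‖v‖ := by rw [sub_zero, abs_of_nonneg ha]; ring
    · intro x hx
      rw [Set.uIoc_of_le ha] at hx
      calc ‖⟪S x v, η⟫_ℝ‖ ≤ ‖S x v‖ * ‖η‖ := by
            simpa using abs_real_inner_le_norm (S x v) η
        _ ≤ M * ‖v‖ * ‖η‖ := by
            have h1 : ‖S x v‖ ≤ M * ‖v‖ :=
              le_trans ((S x).le_opNorm v) (by gcongr; exact hM x ⟨hx.1.le, hx.2⟩)
            gcongr
  let F : V →L[ℝ] ℝ := L.mkContinuous (M * ‖η‖ * a) hLbound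
  have hF : ∀ v : V, F v = ∫ τ in (0:ℝ)..a, ⟪S τ v, η⟫_ℝ := fun v => rfl
  set ξv : V := (InnerProductSpace.toDual ℝ V).symm F with hξv
  have hξ : ∀ v : V, ⟪ξv, v⟫_ℝ = ∫ τ in (0:ℝ)..a, ⟪S τ v, η⟫_ℝ := by
    intro v
    rw [hξv, InnerProductSpace.toDual_symm_apply]
    exact hF v
  -- key computation
  have keyK : ∀ x : A.domain, F ((A x : V)) = ⟪S a (x : V), η⟫_ℝ - ⟪(x : V), η⟫_ℝ := by
    intro x
    have hd : ∀ τ ∈ Set.Ioo (0:ℝ) a,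
        HasDerivWithinAt (fun τ => ⟪S τ (x : V), η⟫_ℝ) (⟪S τ ((A x : V)), η⟫_ℝ) (Set.Ioi τ) τ := by
      intro τ hτ
      have horb := sg_orbit_deriv S hSadd (x : V) (A x) (hgen x) τ hτ.1.le
      have := HasDerivWithinAt.inner ℝ horb (hasDerivWithinAt_const τ (Set.Ici τ) η)
      simpa using this.mono Set.Ioi_subset_Ici_self
    have hcont : ContinuousOn (fun τ => ⟪S τ (x : V), η⟫_ℝ) (Set.Icc 0 a) :=
      (hContIn (x : V)).mono (fun y hy => hy.1)
    have := intervalIntegral.integral_eq_sub_of_hasDeriv_right_of_le ha hcont hd (hInt (A x))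
    rw [hF, this]
    have : S 0 (x : V) = (x : V) := by rw [hS0]; rfl
    rw [this]
  -- the candidate adjoint value
  set w : V := ContinuousLinearMap.adjoint (S a) η - η with hwdef
  have hw : ∀ x : A.domain, ⟪w, (x : V)⟫_ℝ = ⟪ξv, (A x : V)⟫_ℝ := by
    intro x
    rw [hξ, ← hF, keyK, hwdef, inner_sub_left, ContinuousLinearMap.adjoint_inner_left,
      real_inner_comm η, real_inner_comm η]
  have mem : ξv ∈ A.adjoint.domain :=
    LinearPMap.mem_adjoint_domain_of_exists _ ⟨w, hw⟩
  refine ⟨⟨ξv, mem⟩, hξ, ?_⟩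
  exact LinearPMap.adjoint_apply_eq hdense _ (fun x => hw x)

end Auxiliary

open MeasureTheory Real
open scoped InnerProductSpace

/-- Deterministic weak uniqueness: if `A` is the generator of a strongly continuous
semigroup `S_A` on a Hilbert space `V`, `X : [0,T] → V` is continuous with `X 0 = 0` and
`⟨X t, ξ⟩ = ∫₀^t ⟨X r, A* ξ⟩ dr` for all `ξ ∈ Dom(A*)` and `t ∈ [0,T]`, then `X ≡ 0`
on `[0,T]`. -/
theorem weak_solution_homogeneous_vanishes
    {V : Type*} [NormedAddCommGroup V] [InnerProductSpace ℝ V] [CompleteSpace V]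
    (T : ℝ) (hT : 0 < T)
    (A : V →ₗ.[ℝ] V) (hdense : Dense (A.domain : Set V))
    (S_A : ℝ → V →L[ℝ] V)
    (hS0 : S_A 0 = ContinuousLinearMap.id ℝ V)
    (hSadd : ∀ s t : ℝ, 0 ≤ s → 0 ≤ t → S_A (s + t) = (S_A s).comp (S_A t))
    (hScont : ∀ v : V, ContinuousOn (fun t => S_A t v) (Set.Ici 0))
    (hgen : ∀ v : A.domain, HasDerivAt (fun t : ℝ => S_A t (v : V)) (A v) 0)
    (X : ℝ → V)
    (hXcont : ContinuousOn X (Set.Icc 0 T)) (hX0 : X 0 = 0)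
    (hweak : ∀ (ξ : A.adjoint.domain), ∀ t ∈ Set.Icc (0 : ℝ) T,
      ⟪X t, (ξ : V)⟫_ℝ = ∫ r in Set.Ioc (0 : ℝ) t, ⟪X r, A.adjoint ξ⟫_ℝ) :
    ∀ t ∈ Set.Icc (0 : ℝ) T, X t = 0 := by
  set Z : ℝ → V := fun t => ∫ r in (0:ℝ)..t, X r with hZdef
  have hXint : ∀ t ∈ Set.Icc (0:ℝ) T, IntervalIntegrable X volume 0 t := by
    intro t ht
    exact (hXcont.mono (by rw [Set.uIcc_of_le ht.1]; exact Set.Icc_subset_Icc_right ht.2)).intervalIntegrable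
  have hZIoc : ∀ t ∈ Set.Icc (0:ℝ) T, Z t = ∫ r in Set.Ioc (0:ℝ) t, X r := fun t ht =>
    intervalIntegral.integral_of_le ht.1
  have hXintOn : ∀ t ∈ Set.Icc (0:ℝ) T, IntegrableOn X (Set.Ioc 0 t) volume := fun t ht =>
    (hXint t ht).1
  -- the strong identity (II)
  have hII : ∀ t ∈ Set.Icc (0:ℝ) T, ∀ a : ℝ, 0 ≤ a →
      (∫ τ in (0:ℝ)..a, S_A τ (X t)) = S_A a (Z t) - Z t := by
    intro t ht a ha
    apply ext_inner_left ℝ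
    intro η
    obtain ⟨ξ, hξ1, hξ2⟩ := sg_test_vector S_A hS0 hSadd hScont A hdense hgen a ha η
    have hSXcont : ContinuousOn (fun τ => S_A τ (X t)) (Set.Icc 0 a) :=
      (hScont (X t)).mono (fun x hx => hx.1)
    have hSXint : IntervalIntegrable (fun τ => S_A τ (X t)) volume 0 a :=
      (hSXcont.mono (by rw [Set.uIcc_of_le ha])).intervalIntegrable
    have int1 : IntegrableOn (fun r => X r) (Set.Ioc 0 t) volume := hXintOn t ht
    have int2 : IntegrableOn (fun r => S_A a (X r)) (Set.Ioc 0 t) volume :=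
      ((S_A a).continuous.comp_continuousOn
        (hXcont.mono (Set.Icc_subset_Icc_right ht.2))).integrableOn_Icc.mono_set
        Set.Ioc_subset_Icc_self
    have hXcont' := hXcont.mono (Set.Icc_subset_Icc_right ht.2)
    have int2' : IntegrableOn (fun r => ⟪X r, A.adjoint ξ⟫_ℝ) (Set.Ioc 0 t) volume :=
      (hXcont'.inner continuousOn_const).integrableOn_Icc.mono_set Set.Ioc_subset_Icc_self
    have int3 : IntegrableOn (fun r => ⟪η, S_A a (X r)⟫_ℝ) (Set.Ioc 0 t) volume :=
      (continuousOn_const.inner ((S_A a).continuous.comp_continuousOn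
        hXcont')).integrableOn_Icc.mono_set Set.Ioc_subset_Icc_self
    have int4 : IntegrableOn (fun r => ⟪η, X r⟫_ℝ) (Set.Ioc 0 t) volume :=
      (continuousOn_const.inner hXcont').integrableOn_Icc.mono_set Set.Ioc_subset_Icc_self
    -- LHS computation
    have hL : ⟪η, ∫ τ in (0:ℝ)..a, S_A τ (X t)⟫_ℝ = ⟪(ξ:V), X t⟫_ℝ := by
      rw [hξ1 (X t), intervalIntegral.integral_of_le ha, intervalIntegral.integral_of_le ha,
        ← integral_inner hSXint.1 η]
      exact setIntegral_congr_fun measurableSet_Ioc (fun τ _ => real_inner_comm _ _)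
    -- RHS computation
    have hR : ⟪X t, (ξ:V)⟫_ℝ = ⟪η, S_A a (Z t) - Z t⟫_ℝ := by
      rw [hweak ξ t ht]
      have hInteq : ∀ r ∈ Set.Ioc (0:ℝ) t,
          ⟪X r, A.adjoint ξ⟫_ℝ = ⟪η, S_A a (X r)⟫_ℝ - ⟪η, X r⟫_ℝ := by
        intro r _
        rw [hξ2, inner_sub_right, ContinuousLinearMap.adjoint_inner_right,
          real_inner_comm _ η, real_inner_comm _ η]
      rw [setIntegral_congr_fun measurableSet_Ioc hInteq, integral_sub int3 int4,
        integral_inner int2 η, integral_inner int1 η,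
        ContinuousLinearMap.integral_comp_comm _ int1, ← hZIoc t ht, inner_sub_right]
    rw [hL, real_inner_comm, hR]
  -- continuity of Z on [0,T]
  have hZcont : ContinuousOn Z (Set.Icc 0 T) := by
    have h := intervalIntegral.continuousOn_primitive_interval (a := (0:ℝ)) (b := T)
      (μ := volume) (f := X) (by rw [Set.uIcc_of_le hT.le]; exact hXcont.integrableOn_Icc)
    rwa [Set.uIcc_of_le hT.le] at h
  -- derivative of Z within [0,T]
  have hZderiv : ∀ s₀ ∈ Set.Icc (0:ℝ) T, HasDerivWithinAt Z (X s₀) (Set.Icc 0 T) s₀ := by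
    intro s₀ hs₀
    haveI : Fact (s₀ ∈ Set.Icc (0:ℝ) T) := ⟨hs₀⟩
    exact intervalIntegral.integral_hasDerivWithinAt_right (hXint s₀ hs₀)
      ⟨Set.Icc 0 T, self_mem_nhdsWithin, hXcont.aestronglyMeasurable measurableSet_Icc⟩
      (hXcont s₀ hs₀)
  -- Z vanishes on [0,T]
  have hZzero : ∀ t ∈ Set.Icc (0:ℝ) T, Z t = 0 := by
    intro t ht
    rcases eq_or_lt_of_le ht.1 with h0 | h0
    · rw [hZdef, ← h0]
      exact intervalIntegral.integral_same
    · refine ext_inner_right ℝ (fun ξ => ?_)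
      rw [inner_zero_left]
      set G : ℝ → ℝ := fun s => ⟪S_A (t - s) (Z s), ξ⟫_ℝ with hGdef
      have hGcont : ContinuousOn G (Set.Icc 0 t) := by
        intro s hs
        have hZt : Tendsto Z (𝓝[Set.Icc 0 t] s) (𝓝 (Z s)) :=
          (hZcont.mono (Set.Icc_subset_Icc_right ht.2)) s hs
        have hu : Tendsto (fun s' => t - s') (𝓝[Set.Icc 0 t] s) (𝓝 (t - s)) :=
          ((continuous_const.sub continuous_id).tendsto s).mono_left nhdsWithin_le_nhds
        have h0' : ∀ᶠ s' in 𝓝[Set.Icc 0 t] s, 0 ≤ t - s' :=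
          eventually_nhdsWithin_of_forall (fun s' hs' => sub_nonneg.2 hs'.2)
        exact (sg_tendsto S_A hScont _ _ Z (t - s) (Z s) (sub_nonneg.2 hs.2)
          hu h0' hZt).inner (𝕜 := ℝ) tendsto_const_nhds
      have hGderiv : ∀ s₀ ∈ Set.Ico 0 t, HasDerivWithinAt G 0 (Set.Ici s₀) s₀ := by
        intro s₀ hs₀
        have hs₀T : s₀ ∈ Set.Icc (0:ℝ) T := ⟨hs₀.1, hs₀.2.le.trans ht.2⟩
        have ha₀ : 0 < t - s₀ := sub_pos.2 hs₀.2
        -- Term A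
        set Φ : ℝ → V := fun b => ∫ τ in (0:ℝ)..b, S_A τ (X s₀) with hΦdef
        have hΦd : HasDerivAt Φ (S_A (t - s₀) (X s₀)) (t - s₀) := by
          apply intervalIntegral.integral_hasDerivAt_right
          · refine ((hScont (X s₀)).mono ?_).intervalIntegrable
            rw [Set.uIcc_of_le ha₀.le]
            exact fun x hx => hx.1
          · exact ⟨Set.Ioi 0, Ioi_mem_nhds ha₀,
              ((hScont (X s₀)).mono (fun x (hx : x ∈ Set.Ioi (0:ℝ)) => Set.mem_Ici.2 (le_of_lt hx))).aestronglyMeasurable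
                measurableSet_Ioi⟩
          · exact (hScont (X s₀)).continuousAt (Ici_mem_nhds ha₀)
        have hA : HasDerivAt (fun s => ⟪Z s₀ + Φ (t - s), ξ⟫_ℝ)
            (-⟪S_A (t - s₀) (X s₀), ξ⟫_ℝ) s₀ := by
          have hin : HasDerivAt (fun s : ℝ => t - s) (-1) s₀ := by
            simpa using (hasDerivAt_id s₀).const_sub t
          have hcomp0 := hΦd.scomp s₀ hin
          have hcomp : HasDerivAt (fun s => Φ (t - s))
              ((-1:ℝ) • S_A (t - s₀) (X s₀)) s₀ := hcomp0
          have h := ((hasDerivAt_const s₀ (Z s₀)).add hcomp).inner ℝ (hasDerivAt_const s₀ ξ)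
          simpa [neg_smul, real_inner_smul_left] using h
        have hAW : HasDerivWithinAt (fun s => ⟪S_A (t - s) (Z s₀), ξ⟫_ℝ)
            (-⟪S_A (t - s₀) (X s₀), ξ⟫_ℝ) (Set.Icc s₀ t) s₀ := by
          have heq : ∀ s ∈ Set.Icc s₀ t, ⟪S_A (t - s) (Z s₀), ξ⟫_ℝ = ⟪Z s₀ + Φ (t - s), ξ⟫_ℝ := by
            intro s hs
            have h2 := hII s₀ hs₀T (t - s) (sub_nonneg.2 hs.2)
            rw [hΦdef]
            simp only []
            rw [h2]
            congr 1
            abel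
          exact hA.hasDerivWithinAt.congr heq (heq s₀ ⟨le_rfl, hs₀.2.le⟩)
        -- Term B
        have hBW : HasDerivWithinAt (fun s => ⟪S_A (t - s) (Z s - Z s₀), ξ⟫_ℝ)
            (⟪S_A (t - s₀) (X s₀), ξ⟫_ℝ) (Set.Icc s₀ t) s₀ := by
          rw [hasDerivWithinAt_iff_tendsto_slope]
          have hslopeZ : Tendsto (slope Z s₀) (𝓝[Set.Icc s₀ t \ {s₀}] s₀) (𝓝 (X s₀)) := by
            have h := (hZderiv s₀ hs₀T).mono
              (Set.Icc_subset_Icc hs₀.1 ht.2 : Set.Icc s₀ t ⊆ Set.Icc 0 T)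
            exact hasDerivWithinAt_iff_tendsto_slope.mp h
          have hu : Tendsto (fun s => t - s) (𝓝[Set.Icc s₀ t \ {s₀}] s₀) (𝓝 (t - s₀)) :=
            ((continuous_const.sub continuous_id).tendsto s₀).mono_left nhdsWithin_le_nhds
          have h0' : ∀ᶠ s in 𝓝[Set.Icc s₀ t \ {s₀}] s₀, 0 ≤ t - s :=
            eventually_nhdsWithin_of_forall (fun s hs => sub_nonneg.2 hs.1.2)
          have hmain := (sg_tendsto S_A hScont _ _ (slope Z s₀) (t - s₀) (X s₀) ha₀.le
            hu h0' hslopeZ).inner (𝕜 := ℝ) (tendsto_const_nhds (x := ξ))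
          refine Tendsto.congr' ?_ hmain
          filter_upwards [self_mem_nhdsWithin] with s hs
          simp [slope_def_module, _root_.map_smul, real_inner_smul_left]
        -- combine
        have hsum := hAW.add hBW
        rw [neg_add_cancel] at hsum
        have hGW : HasDerivWithinAt G 0 (Set.Icc s₀ t) s₀ := by
          refine hsum.congr (fun s _ => ?_) ?_
          · rw [hGdef]
            simp only []
            rw [Pi.add_apply, ← inner_add_left, ← map_add]
            congr 2
            abel
          · rw [hGdef]
            simp only []
            rw [Pi.add_apply, ← inner_add_left, ← map_add]
            congr 2
            abel
        exact hGW.mono_of_mem_nhdsWithin (Icc_mem_nhdsGE_of_mem ⟨le_rfl, hs₀.2⟩)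
      have hconst := constant_of_has_deriv_right_zero hGcont hGderiv t ⟨h0.le, le_rfl⟩
      have hGt : G t = ⟪Z t, ξ⟫_ℝ := by
        rw [hGdef]; simp only [sub_self, hS0]; rfl
      have hG0 : G 0 = 0 := by
        rw [hGdef]
        simp only [sub_zero]
        have : Z 0 = 0 := intervalIntegral.integral_same
        rw [this, map_zero, inner_zero_left]
      rw [← hGt, hconst, hG0]
  -- conclude
  intro s hs
  have h1 := hZderiv s hs
  have h2 : HasDerivWithinAt Z 0 (Set.Icc 0 T) s :=
    (hasDerivWithinAt_const s _ (0:V)).congr (fun y hy => hZzero y hy) (hZzero s hs)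
  have hu := (uniqueDiffOn_Icc hT) s hs
  rw [← h1.derivWithin hu, h2.derivWithin hu]
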